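/- (Theorem 1, first part.) For every integer m ≥ 1, the Fibonacci code Fib m is a (k,Δ)-code: every codeword w of Fib m can be written as a concatenation w = g_1 g_2 ⋯ g_r of a nonempty finite sequence of binary words, where each g_j either has the form 0^{k-1} 1 1^{Δ} 0 for some integers k ≥ 1 and 0 ≤ Δ ≤ m−2, or has the form 0^{k-1} 1^m for some integer k ≥ 1. -/

import Mathlib

/-- The Fibonacci code of order `m`: all binary words having `1^m` as a suffix and
containing `1^m` as a substring only in that suffix position (this includes the
word `1^m` itself). -/
def FibCode (m : ℕ) : Set (List Bool) :=
  {w | List.replicate m true <:+ w ∧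
    ∀ u v, w = u ++ List.replicate m true ++ v → v = []}

/-- A group: `0^{k-1} 1 1^Δ 0` with `Δ+2 ≤ m`, or `0^{k-1} 1^m`. -/
def IsGroup (m : ℕ) (g : List Bool) : Prop :=
  (∃ k Δ : ℕ, 1 ≤ k ∧ Δ + 2 ≤ m ∧
    g = List.replicate (k - 1) false ++ [true] ++
        List.replicate Δ true ++ [false]) ∨
  (∃ k : ℕ, 1 ≤ k ∧
    g = List.replicate (k - 1) false ++ List.replicate m true)

lemma mem_of_getLast?' {l : List Bool} {a : Bool} (h : l.getLast? = some a) : a ∈ l := by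
  cases l with
  | nil => simp at h
  | cons b bs =>
    rw [List.getLast?_eq_getLast (l := b :: bs) (by simp)] at h
    have hmem := List.getLast_mem (l := b :: bs) (by simp)
    injection h with h'
    rwa [h'] at hmem

lemma run_decomp (w : List Bool) : ∃ j rest, w = List.replicate j true ++ rest ∧
    (rest = [] ∨ ∃ r, rest = false :: r) := by
  induction w with
  | nil => exact ⟨0, [], rfl, Or.inl rfl⟩
  | cons a w ih =>
    obtain ⟨j, rest, h1, h2⟩ := ih
    cases a with
    | false => exact ⟨0, false :: w, rfl, Or.inr ⟨w, rfl⟩⟩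
    | true => exact ⟨j + 1, rest, by simp [List.replicate_succ, h1], h2⟩

lemma false_cons_group {m : ℕ} (g : List Bool) (hg : IsGroup m g) : IsGroup m (false :: g) := by
  rcases hg with ⟨k, Δ, hk, hΔ, rfl⟩ | ⟨k, hk, rfl⟩
  · left
    refine ⟨k + 1, Δ, by omega, hΔ, ?_⟩
    have : k + 1 - 1 = (k - 1) + 1 := by omega
    simp [this, List.replicate_succ]
  · right
    refine ⟨k + 1, by omega, ?_⟩
    have : k + 1 - 1 = (k - 1) + 1 := by omega
    simp [this, List.replicate_succ]

lemma fib_main (m : ℕ) (hm : 1 ≤ m) : ∀ n, ∀ w : List Bool, w.length ≤ n → w ∈ FibCode m →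
    ∃ gs : List (List Bool), gs ≠ [] ∧ w = gs.flatten ∧ ∀ g ∈ gs, IsGroup m g := by
  intro n
  induction n with
  | zero =>
    intro w hlen hw
    have hw0 : w = [] := List.length_eq_zero_iff.mp (Nat.le_zero.mp hlen)
    obtain ⟨t, ht⟩ := hw.1
    subst hw0
    have : m = 0 := by
      have := congrArg List.length ht
      simp at this
      omega
    omega
  | succ n ih =>
    intro w hlen hw
    obtain ⟨j, rest, hwd, hrest⟩ := run_decomp w
    rcases Nat.eq_zero_or_pos j with hj0 | hjpos
    · -- w starts with false (or is empty)
      subst hj0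
      simp at hwd
      rcases hrest with rfl | ⟨r, rfl⟩
      · -- w = [] : impossible
        subst hwd
        obtain ⟨t, ht⟩ := hw.1
        have := congrArg List.length ht
        simp at this
        omega
      · -- w = false :: r
        subst hwd
        have hr : r ∈ FibCode m := by
          constructor
          · obtain ⟨t, ht⟩ := hw.1
            cases t with
            | nil =>
              exfalso
              obtain ⟨m', rfl⟩ : ∃ m', m = m' + 1 := ⟨m - 1, by omega⟩
              rw [List.replicate_succ] at ht
              simp at ht
            | cons a t' =>
              refine ⟨t', ?_⟩
              simpa using congrArg List.tail ht
          · intro u v h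
            exact hw.2 (false :: u) v (by simp [h])
        obtain ⟨gs, hne, hfl, hgs⟩ := ih r (by simp at hlen; omega) hr
        cases gs with
        | nil => exact absurd rfl hne
        | cons g gs' =>
          refine ⟨(false :: g) :: gs', by simp, ?_, ?_⟩
          · simp [hfl]
          · intro g' hg'
            rw [List.mem_cons] at hg'
            rcases hg' with rfl | hg'
            · exact false_cons_group g (hgs g (by simp))
            · exact hgs g' (by simp [hg'])
    · -- w = 1^j ++ rest, j ≥ 1
      rcases hrest with rfl | ⟨r, rfl⟩
      · -- w = 1^j, must have j = m
        simp only [List.append_nil] at hwd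
        have hjm : j = m := by
          obtain ⟨t, ht⟩ := hw.1
          have hlen2 := congrArg List.length ht
          simp [hwd] at hlen2
          have hmle : m ≤ j := by omega
          by_contra hne
          have hlt : m < j := by omega
          have : (List.replicate (j - m) true : List Bool) = [] := by
            apply hw.2 []
            rw [hwd]
            simp [← List.replicate_add]
            omega
          simp at this
          omega
        subst hjm
        refine ⟨[w], by simp, by simp, ?_⟩
        intro g hg
        rw [List.mem_singleton] at hg
        subst hg
        right
        exact ⟨1, le_refl 1, by simp [hwd]⟩
      · -- w = 1^j ++ false :: r
        have hjm : j + 1 ≤ m := by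
          by_contra h
          have hmj : m ≤ j := by omega
          have hsplit : (List.replicate j true : List Bool) =
              List.replicate m true ++ List.replicate (j - m) true := by
            rw [← List.replicate_add]
            congr 1
            omega
          have : (List.replicate (j - m) true ++ false :: r : List Bool) = [] := by
            apply hw.2 []
            rw [hwd, hsplit]
            simp only [List.nil_append, List.append_assoc]
          simp at this
        have hr : r ∈ FibCode m := by
          constructor
          · obtain ⟨t, ht⟩ := hw.1
            rw [hwd] at ht
            have ht' : t ++ List.replicate m true =
                (List.replicate j true ++ [false]) ++ r := by
              simpa using ht
            rcases List.append_eq_append_iff.mp ht' with ⟨a', ha1, ha2⟩ | ⟨c', hc1, hc2⟩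
            · -- 1^j ++ [false] = t ++ a',  1^m = a' ++ r
              cases a' with
              | nil =>
                simp at ha2
                exact ha2 ▸ List.suffix_refl _
              | cons b b' =>
                exfalso
                have hlast : ((b :: b') : List Bool).getLast? = some false := by
                  have h1 : (t ++ b :: b').getLast? = (b :: b').getLast? := by
                    rw [List.getLast?_append]
                    cases h : (b :: b').getLast? with
                    | none => simp at h
                    | some x => simp
                  rw [← ha1, List.getLast?_concat] at h1
                  exact h1.symm
                have : false ∈ List.replicate m true :=
                  ha2 ▸ List.mem_append_left _ (mem_of_getLast?' hlast)
                simp at this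
            · -- t = (1^j ++ [false]) ++ c',  r = c' ++ 1^m
              exact ⟨c', hc2.symm⟩
          · intro u v h
            apply hw.2 (List.replicate j true ++ false :: u) v
            rw [hwd, h]
            simp
        have hlr : r.length ≤ n := by
          have := congrArg List.length hwd
          simp at this
          omega
        obtain ⟨gs, hne, hfl, hgs⟩ := ih r hlr hr
        refine ⟨(List.replicate j true ++ [false]) :: gs, by simp, ?_, ?_⟩
        · simp [hwd, hfl]
        · intro g hg
          rw [List.mem_cons] at hg
          rcases hg with rfl | hg
          · left
            refine ⟨1, j - 1, le_refl 1, by omega, ?_⟩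
            have hrep : (true :: List.replicate (j - 1) true : List Bool) =
                List.replicate j true := by
              rw [← List.replicate_succ]
              congr 1
              omega
            simp only [Nat.sub_self, List.replicate_zero, List.nil_append,
              List.singleton_append]
            rw [hrep]
          · exact hgs g hg

theorem fibCode_is_kDelta_code (m : ℕ) (hm : 1 ≤ m) :
    ∀ w ∈ FibCode m, ∃ gs : List (List Bool), gs ≠ [] ∧ w = gs.flatten ∧
      ∀ g ∈ gs,
        (∃ k Δ : ℕ, 1 ≤ k ∧ Δ + 2 ≤ m ∧
          g = List.replicate (k - 1) false ++ [true] ++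
              List.replicate Δ true ++ [false]) ∨
        (∃ k : ℕ, 1 ≤ k ∧
          g = List.replicate (k - 1) false ++ List.replicate m true) := by
  intro w hw
  obtain ⟨gs, hne, hfl, hgs⟩ := fib_main m hm w.length w le_rfl hw
  exact ⟨gs, hne, hfl, fun g hg => hgs g hg⟩
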